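/- Let G be a group with normal subgroups G_1 and G_2, let H be an abelian group with subgroups H_1 and H_2, and let φ : G → Aut(H) be a group homomorphism such that φ(g_i)(H_i) = H_i for all g_i ∈ G_i, i = 1, 2. Let L be the subgroup of H generated by {φ(g_1)(h_2)·h_2^{-1} : g_1 ∈ G_1, h_2 ∈ H_2} ∪ {φ(g_2)(h_1)·h_1^{-1} : g_2 ∈ G_2, h_1 ∈ H_1}. Then: (a) φ(g)(L) = L for every g ∈ [G_1, G_2]; and (b) in the semidirect product H ⋊_φ G one has [H_1 ⋊_φ G_1, H_2 ⋊_φ G_2] = L ⋊_φ [G_1, G_2]. -/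

import Mathlib

open PowerSeries Finset

namespace RiordanPaper

variable {K : Type*} [CommRing K]

open scoped commutatorElement

lemma aux_inv {G H : Type*} [Group G] [CommGroup H] (φ : G →* MulAut H)
    (G₁ G₂ : Subgroup G) [G₂.Normal] (H₁ H₂ : Subgroup H)
    (hφ1 : ∀ g ∈ G₁, ∀ h ∈ H₁, φ g h ∈ H₁)
    (g : G) (hg : g ∈ G₁) :
    ∀ h ∈ Subgroup.closure
      ({x : H | ∃ g ∈ G₁, ∃ h ∈ H₂, x = φ g h * h⁻¹} ∪
       {x : H | ∃ g ∈ G₂, ∃ h ∈ H₁, x = φ g h * h⁻¹}),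
    φ g h ∈ Subgroup.closure
      ({x : H | ∃ g ∈ G₁, ∃ h ∈ H₂, x = φ g h * h⁻¹} ∪
       {x : H | ∃ g ∈ G₂, ∃ h ∈ H₁, x = φ g h * h⁻¹}) := by
  intro h hh
  induction hh using Subgroup.closure_induction with
  | mem x hx =>
    rcases hx with ⟨g₁, hg₁, h₂, hh₂, rfl⟩ | ⟨g₂, hg₂, h₁, hh₁, rfl⟩
    · have e : φ g (φ g₁ h₂ * h₂⁻¹) =
          (φ (g * g₁) h₂ * h₂⁻¹) * (φ g h₂ * h₂⁻¹)⁻¹ := by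
        simp [map_mul, MulAut.mul_apply, mul_comm, mul_left_comm, mul_assoc]
      rw [e]
      exact mul_mem (Subgroup.subset_closure (Or.inl ⟨g * g₁, mul_mem hg hg₁, h₂, hh₂, rfl⟩))
        (inv_mem (Subgroup.subset_closure (Or.inl ⟨g, hg, h₂, hh₂, rfl⟩)))
    · have e : φ g (φ g₂ h₁ * h₁⁻¹) =
          φ (g * g₂ * g⁻¹) (φ g h₁) * (φ g h₁)⁻¹ := by
        have : φ (g * g₂ * g⁻¹) (φ g h₁) = φ (g * g₂) h₁ := by
          simp [map_mul, map_inv, MulAut.mul_apply]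
        rw [this]
        simp [map_mul, MulAut.mul_apply]
      rw [e]
      exact Subgroup.subset_closure (Or.inr ⟨g * g₂ * g⁻¹,
        Subgroup.Normal.conj_mem ‹G₂.Normal› g₂ hg₂ g, φ g h₁, hφ1 g hg h₁ hh₁, rfl⟩)
  | one => simpa using one_mem _
  | mul a b _ _ ha hb => rw [map_mul]; exact mul_mem ha hb
  | inv a _ ha => rw [map_inv]; exact inv_mem ha

lemma comm_left {G H : Type*} [Group G] [CommGroup H] (φ : G →* MulAut H)
    (x y : H ⋊[φ] G) :
    ⁅x, y⁆.left = (φ (x.right * y.right * x.right⁻¹) x.left * x.left⁻¹)⁻¹ *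
      φ x.right ((φ (y.right * x.right⁻¹ * y.right⁻¹) y.left * y.left⁻¹)⁻¹) := by
  simp [commutatorElement_def, SemidirectProduct.mul_left, SemidirectProduct.inv_left,
    SemidirectProduct.mul_right, SemidirectProduct.inv_right, map_mul, map_inv,
    MulAut.mul_apply, mul_comm, mul_left_comm, mul_assoc]

lemma comm_right {G H : Type*} [Group G] [CommGroup H] (φ : G →* MulAut H)
    (x y : H ⋊[φ] G) : ⁅x, y⁆.right = ⁅x.right, y.right⁆ := by
  simp [commutatorElement_def, SemidirectProduct.mul_right, SemidirectProduct.inv_right]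

lemma comm_inr_inl {G H : Type*} [Group G] [CommGroup H] (φ : G →* MulAut H)
    (g : G) (h : H) :
    ⁅SemidirectProduct.inr (φ := φ) g, SemidirectProduct.inl (φ := φ) h⁆ =
      SemidirectProduct.inl (φ := φ) (φ g h * h⁻¹) := by
  ext
  · rw [comm_left]
    simp [map_mul, map_inv, MulAut.mul_apply, mul_comm, mul_left_comm, mul_assoc]
  · rw [comm_right]; simp

lemma comm_inl_inr {G H : Type*} [Group G] [CommGroup H] (φ : G →* MulAut H)
    (g : G) (h : H) :
    ⁅SemidirectProduct.inl (φ := φ) h, SemidirectProduct.inr (φ := φ) g⁆ =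
      SemidirectProduct.inl (φ := φ) ((φ g h * h⁻¹)⁻¹) := by
  ext
  · rw [comm_left]
    simp [map_mul, map_inv, MulAut.mul_apply, mul_comm, mul_left_comm, mul_assoc]
  · rw [comm_right]; simp

theorem commutator_of_semidirect_products (G : Type*) [Group G] (H : Type*) [CommGroup H]
    (φ : G →* MulAut H) (G₁ G₂ : Subgroup G) [G₁.Normal] [G₂.Normal]
    (H₁ H₂ : Subgroup H)
    (hφ1 : ∀ g ∈ G₁, (φ g) '' (H₁ : Set H) = (H₁ : Set H))
    (hφ2 : ∀ g ∈ G₂, (φ g) '' (H₂ : Set H) = (H₂ : Set H))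
    (L : Subgroup H)
    (hL : L = Subgroup.closure
      ({x : H | ∃ g ∈ G₁, ∃ h ∈ H₂, x = φ g h * h⁻¹} ∪
       {x : H | ∃ g ∈ G₂, ∃ h ∈ H₁, x = φ g h * h⁻¹}))
    (P₁ P₂ P₃ : Subgroup (H ⋊[φ] G))
    (hP₁ : (P₁ : Set (H ⋊[φ] G)) = {x | x.left ∈ H₁ ∧ x.right ∈ G₁})
    (hP₂ : (P₂ : Set (H ⋊[φ] G)) = {x | x.left ∈ H₂ ∧ x.right ∈ G₂})
    (hP₃ : (P₃ : Set (H ⋊[φ] G)) = {x | x.left ∈ L ∧ x.right ∈ ⁅G₁, G₂⁆}) :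
    (∀ g ∈ ⁅G₁, G₂⁆, (φ g) '' (L : Set H) = (L : Set H)) ∧ ⁅P₁, P₂⁆ = P₃ := by
  have hφ1' : ∀ g ∈ G₁, ∀ h ∈ H₁, φ g h ∈ H₁ := by
    intro g hg h hh
    have : φ g h ∈ (H₁ : Set H) := (hφ1 g hg) ▸ ⟨h, hh, rfl⟩
    exact this
  have hφ2' : ∀ g ∈ G₂, ∀ h ∈ H₂, φ g h ∈ H₂ := by
    intro g hg h hh
    have : φ g h ∈ (H₂ : Set H) := (hφ2 g hg) ▸ ⟨h, hh, rfl⟩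
    exact this
  have inv1 : ∀ g ∈ G₁, ∀ h ∈ L, φ g h ∈ L := by
    rw [hL]; exact fun g hg => aux_inv φ G₁ G₂ H₁ H₂ hφ1' g hg
  have inv2 : ∀ g ∈ G₂, ∀ h ∈ L, φ g h ∈ L := by
    have := aux_inv φ G₂ G₁ H₂ H₁ hφ2'
    rw [Set.union_comm] at this
    rw [hL]; exact fun g hg => this g hg
  -- the stabilizer-type subgroup
  let T : Subgroup G :=
    { carrier := {g | ∀ h : H, h ∈ L ↔ φ g h ∈ L}
      one_mem' := by intro h; simp
      mul_mem' := by
        intro a b ha hb h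
        rw [map_mul]
        exact (hb h).trans (ha (φ b h))
      inv_mem' := by
        intro a ha h
        constructor
        · intro hh
          have := (ha (φ a⁻¹ h)).mpr
          apply this
          simpa [map_inv] using hh
        · intro hh
          have := (ha (φ a⁻¹ h)).mp hh
          simpa [map_inv] using this }
  have hT1 : ∀ g ∈ G₁, g ∈ T := by
    intro g hg h
    refine ⟨fun hh => inv1 g hg h hh, fun hh => ?_⟩
    have := inv1 g⁻¹ (inv_mem hg) _ hh
    simpa [map_inv, ← MulAut.mul_apply] using this
  have hT2 : ∀ g ∈ G₂, g ∈ T := by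
    intro g hg h
    refine ⟨fun hh => inv2 g hg h hh, fun hh => ?_⟩
    have := inv2 g⁻¹ (inv_mem hg) _ hh
    simpa [map_inv, ← MulAut.mul_apply] using this
  have hTc : ⁅G₁, G₂⁆ ≤ T := by
    rw [Subgroup.commutator_le]
    intro g₁ hg₁ g₂ hg₂
    rw [commutatorElement_def]
    exact mul_mem (mul_mem (mul_mem (hT1 g₁ hg₁) (hT2 g₂ hg₂))
      (inv_mem (hT1 g₁ hg₁))) (inv_mem (hT2 g₂ hg₂))
  have partA : ∀ g ∈ ⁅G₁, G₂⁆, (φ g) '' (L : Set H) = (L : Set H) := by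
    intro g hg
    have hgT : g ∈ T := hTc hg
    ext x
    constructor
    · rintro ⟨h, hh, rfl⟩
      exact (hgT h).mp hh
    · intro hx
      refine ⟨φ g⁻¹ x, ?_, by simp [map_inv]⟩
      exact (T.inv_mem hgT x).mp hx
  refine ⟨partA, ?_⟩
  have memP₁ : ∀ x : H ⋊[φ] G, x ∈ P₁ ↔ x.left ∈ H₁ ∧ x.right ∈ G₁ := by
    intro x; rw [← SetLike.mem_coe, hP₁]; rfl
  have memP₂ : ∀ x : H ⋊[φ] G, x ∈ P₂ ↔ x.left ∈ H₂ ∧ x.right ∈ G₂ := by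
    intro x; rw [← SetLike.mem_coe, hP₂]; rfl
  have memP₃ : ∀ x : H ⋊[φ] G, x ∈ P₃ ↔ x.left ∈ L ∧ x.right ∈ ⁅G₁, G₂⁆ := by
    intro x; rw [← SetLike.mem_coe, hP₃]; rfl
  apply le_antisymm
  · rw [Subgroup.commutator_le]
    intro x hx y hy
    obtain ⟨hx1, hx2⟩ := (memP₁ x).mp hx
    obtain ⟨hy1, hy2⟩ := (memP₂ y).mp hy
    rw [memP₃]
    constructor
    · rw [comm_left]
      refine mul_mem (inv_mem ?_) ?_
      · rw [hL]
        exact Subgroup.subset_closure (Or.inr ⟨x.right * y.right * x.right⁻¹,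
          Subgroup.Normal.conj_mem ‹G₂.Normal› y.right hy2 x.right, x.left, hx1, rfl⟩)
      · refine inv1 x.right hx2 _ (inv_mem ?_)
        rw [hL]
        exact Subgroup.subset_closure (Or.inl ⟨y.right * x.right⁻¹ * y.right⁻¹,
          Subgroup.Normal.conj_mem ‹G₁.Normal› x.right⁻¹ (inv_mem hx2) y.right, y.left, hy1, rfl⟩)
    · rw [comm_right]
      exact Subgroup.commutator_mem_commutator hx2 hy2
  · intro x hx
    obtain ⟨hx1, hx2⟩ := (memP₃ x).mp hx
    rw [← SemidirectProduct.inl_left_mul_inr_right x]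
    have hinrP₁ : ∀ g ∈ G₁, (SemidirectProduct.inr g : H ⋊[φ] G) ∈ P₁ := by
      intro g hg; rw [memP₁]; exact ⟨by simpa using one_mem H₁, by simpa using hg⟩
    have hinrP₂ : ∀ g ∈ G₂, (SemidirectProduct.inr g : H ⋊[φ] G) ∈ P₂ := by
      intro g hg; rw [memP₂]; exact ⟨by simpa using one_mem H₂, by simpa using hg⟩
    have hinlP₁ : ∀ h ∈ H₁, (SemidirectProduct.inl h : H ⋊[φ] G) ∈ P₁ := by
      intro h hh; rw [memP₁]; exact ⟨by simpa using hh, by simpa using one_mem G₁⟩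
    have hinlP₂ : ∀ h ∈ H₂, (SemidirectProduct.inl h : H ⋊[φ] G) ∈ P₂ := by
      intro h hh; rw [memP₂]; exact ⟨by simpa using hh, by simpa using one_mem G₂⟩
    refine mul_mem ?_ ?_
    · -- inl x.left ∈ ⁅P₁, P₂⁆
      have hle : L ≤ Subgroup.comap (SemidirectProduct.inl : H →* H ⋊[φ] G) ⁅P₁, P₂⁆ := by
        rw [hL, Subgroup.closure_le]
        rintro s (⟨g, hg, h, hh, rfl⟩ | ⟨g, hg, h, hh, rfl⟩)
        · show (SemidirectProduct.inl (φ g h * h⁻¹) : H ⋊[φ] G) ∈ ⁅P₁, P₂⁆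
          rw [← comm_inr_inl]
          exact Subgroup.commutator_mem_commutator (hinrP₁ g hg) (hinlP₂ h hh)
        · show (SemidirectProduct.inl (φ g h * h⁻¹) : H ⋊[φ] G) ∈ ⁅P₁, P₂⁆
          have := Subgroup.commutator_mem_commutator (hinlP₁ h hh) (hinrP₂ g hg)
          rw [comm_inl_inr, map_inv] at this
          simpa using inv_mem this
      exact hle hx1
    · have hle : ⁅G₁, G₂⁆ ≤
          Subgroup.comap (SemidirectProduct.inr : G →* H ⋊[φ] G) ⁅P₁, P₂⁆ := by
        rw [Subgroup.commutator_le]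
        intro g₁ hg₁ g₂ hg₂
        show (SemidirectProduct.inr ⁅g₁, g₂⁆ : H ⋊[φ] G) ∈ ⁅P₁, P₂⁆
        rw [map_commutatorElement]
        exact Subgroup.commutator_mem_commutator (hinrP₁ g₁ hg₁) (hinrP₂ g₂ hg₂)
      exact hle hx2

end RiordanPaper
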